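/- For α > 1 and z > 0 real: 𝕃_{α,1}(z) = 1 - 𝕃_{1/α,1}(z^{-1/α}), where 𝕃_{α,1}(z) = ∫_0^∞ exp(-z x^α - x) dx and 𝕃_{1/α,1}(w) is given by its convergent power series ∑_{n≥0} (-1)^n Γ(n/α + 1) w^n / n!. -/

import Mathlib

open MeasureTheory Real Set
open scoped ENNReal NNReal

noncomputable def Fa (α w : ℝ) (n : ℕ) (y : ℝ) : ℝ :=
  ((-w) ^ n / n.factorial) * (y ^ (n : ℝ) * Real.exp (-y ^ α))

lemma exp_tsum (x : ℝ) : Real.exp x = ∑' n : ℕ, x ^ n / n.factorial := by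
  rw [Real.exp_eq_exp_ℝ, NormedSpace.exp_eq_tsum_div]

lemma Fa_meas (α w : ℝ) (n : ℕ) : AEStronglyMeasurable (Fa α w n) (volume.restrict (Ioi 0)) := by
  apply Measurable.aestronglyMeasurable
  unfold Fa
  fun_prop

lemma Fa_integral (α w : ℝ) (hα0 : 0 < α) (n : ℕ) :
    (∫ y in Ioi (0:ℝ), Fa α w n y)
      = ((-w)^n / n.factorial) * ((1/α) * Real.Gamma (((n:ℝ)+1)/α)) := by
  unfold Fa
  rw [MeasureTheory.integral_const_mul,
    integral_rpow_mul_exp_neg_rpow hα0 (lt_of_lt_of_le neg_one_lt_zero (Nat.cast_nonneg n))]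

lemma Fa_norm (α w : ℝ) (hw : 0 < w) (n : ℕ) {y : ℝ} (hy : 0 < y) :
    ‖Fa α w n y‖ = (w*y)^n / n.factorial * Real.exp (-y ^ α) := by
  simp only [Fa, Real.norm_eq_abs, abs_mul, abs_div, abs_pow, abs_neg,
    abs_of_pos hw, Nat.abs_cast, Real.rpow_natCast]
  rw [abs_of_pos hy, abs_of_pos (Real.exp_pos _), mul_pow]
  ring

lemma Fa_tsum (α w : ℝ) (hw : 0 < w) {y : ℝ} (hy : 0 < y) :
    Real.exp (-y ^ α - w * y) = ∑' n : ℕ, Fa α w n y := by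
  calc Real.exp (-y ^ α - w * y)
      = Real.exp (-(w*y)) * Real.exp (-y ^ α) := by rw [← Real.exp_add]; congr 1; ring
    _ = (∑' n : ℕ, (-(w*y))^n / n.factorial) * Real.exp (-y ^ α) := by rw [← exp_tsum]
    _ = ∑' n : ℕ, (-(w*y))^n / n.factorial * Real.exp (-y ^ α) := tsum_mul_right.symm
    _ = ∑' n : ℕ, Fa α w n y := by
        refine tsum_congr fun n => ?_
        simp only [Fa, Real.rpow_natCast]
        rw [show -(w*y) = (-w)*y by ring, mul_pow]
        ring

lemma Fa_key (α w : ℝ) (hw : 0 < w) {y : ℝ} (hy : 0 < y) :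
    ∑' n : ℕ, (‖Fa α w n y‖₊ : ℝ≥0∞)
      = ENNReal.ofReal (Real.exp (w * y - y ^ α)) := by
  have hs : Summable (fun n : ℕ => (w*y)^n / n.factorial * Real.exp (-y ^ α)) :=
    (Real.summable_pow_div_factorial (w*y)).mul_right _
  have hs' : Summable (fun n : ℕ => ‖Fa α w n y‖) := by
    refine hs.congr fun n => (Fa_norm α w hw n hy).symm
  calc ∑' n : ℕ, (‖Fa α w n y‖₊ : ℝ≥0∞)
      = ∑' n : ℕ, ENNReal.ofReal ‖Fa α w n y‖ :=
        tsum_congr fun n => (ofReal_norm _).symm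
    _ = ENNReal.ofReal (∑' n : ℕ, ‖Fa α w n y‖) :=
        (ENNReal.ofReal_tsum_of_nonneg (fun n => norm_nonneg _) hs').symm
    _ = ENNReal.ofReal (Real.exp (w * y - y ^ α)) := by
        congr 1
        calc ∑' n : ℕ, ‖Fa α w n y‖
            = ∑' n : ℕ, (w*y)^n / n.factorial * Real.exp (-y ^ α) :=
              tsum_congr fun n => Fa_norm α w hw n hy
          _ = (∑' n : ℕ, (w*y)^n / n.factorial) * Real.exp (-y ^ α) := tsum_mul_right
          _ = Real.exp (w*y) * Real.exp (-y ^ α) := by rw [← exp_tsum]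
          _ = Real.exp (w * y - y ^ α) := by rw [← Real.exp_add, ← sub_eq_add_neg]

/-- Lemma 1.1(c), the stable-law duality: for `α > 1` and `z > 0`,
`∫_0^∞ exp(-z x^α - x) dx = 1 - ∑ (-1)^n Γ(n/α + 1) (z^{-1/α})^n / n!`. -/
theorem stmt_6 (α z : ℝ) (hα : 1 < α) (hz : 0 < z) :
    ∫ x in Set.Ioi (0 : ℝ), Real.exp (-z * x ^ α - x)
      = 1 - ∑' n : ℕ,
          ((-1 : ℝ) ^ n * Real.Gamma ((n : ℝ) / α + 1) / (n.factorial : ℝ)) *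
            (z ^ (-(1 / α))) ^ n := by
  have hα0 : (0:ℝ) < α := lt_trans one_pos hα
  set w : ℝ := z ^ (-(1/α)) with hw_def
  have hw : 0 < w := rpow_pos_of_pos hz _
  have hwα : w ^ α = z⁻¹ := by
    rw [hw_def, ← Real.rpow_mul hz.le, neg_mul, one_div,
      inv_mul_cancel₀ hα0.ne', Real.rpow_neg_one]
  -- bound constant
  obtain ⟨C, hC0, hC⟩ : ∃ C : ℝ, 0 ≤ C ∧ ∀ y : ℝ, 0 ≤ y → (w+1) * y ≤ y ^ α + C := by
    refine ⟨(w+1) * max ((w+1) ^ (1/(α-1))) 1, by positivity, fun y hy => ?_⟩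
    rcases le_or_gt y (max ((w+1) ^ (1/(α-1))) 1) with h | h
    · have h1 : (w+1) * y ≤ (w+1) * max ((w+1) ^ (1/(α-1))) 1 :=
        mul_le_mul_of_nonneg_left h (by positivity)
      have h2 : (0:ℝ) ≤ y ^ α := rpow_nonneg hy α
      linarith
    · have hy1 : (1:ℝ) < y := lt_of_le_of_lt (le_max_right _ _) h
      have hyR : (w+1) ^ (1/(α-1)) ≤ y := le_of_lt (lt_of_le_of_lt (le_max_left _ _) h)
      have hα1 : (0:ℝ) < α - 1 := by linarith
      have h1 : (w+1) ≤ y ^ (α - 1) := by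
        calc w+1 = ((w+1) ^ (1/(α-1))) ^ (α-1) := by
              rw [← Real.rpow_mul (by positivity), one_div,
                inv_mul_cancel₀ hα1.ne', Real.rpow_one]
          _ ≤ y ^ (α-1) := Real.rpow_le_rpow (by positivity) hyR hα1.le
      have h2 : (w+1) * y ≤ y ^ (α-1) * y := mul_le_mul_of_nonneg_right h1 hy
      have h3 : y ^ (α-1) * y = y ^ α := by
        rw [show α = (α-1)+1 by ring, Real.rpow_add_one (by positivity : y ≠ 0)]
        ring_nf
      have h4 : (0:ℝ) ≤ (w+1) * max ((w+1) ^ (1/(α-1))) 1 := by positivity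
      linarith
  -- integrable bound
  have hg : IntegrableOn (fun y : ℝ => Real.exp C * Real.exp (-y)) (Ioi 0) := by
    have h := exp_neg_integrableOn_Ioi 0 (zero_lt_one (α := ℝ))
    simp only [neg_one_mul] at h
    exact h.const_mul _
  -- summability of lintegrals
  have hsum_lint : (∑' n : ℕ, ∫⁻ y in Ioi (0:ℝ), (‖Fa α w n y‖₊ : ℝ≥0∞)) ≠ ⊤ := by
    rw [← lintegral_tsum (f := fun n y => (‖Fa α w n y‖₊ : ℝ≥0∞)) (fun n => (Fa_meas α w n).enorm)]
    have hle : (∫⁻ y in Ioi (0:ℝ), ∑' n : ℕ, (‖Fa α w n y‖₊ : ℝ≥0∞))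
        ≤ ∫⁻ y in Ioi (0:ℝ), (‖Real.exp C * Real.exp (-y)‖₊ : ℝ≥0∞) := by
      refine lintegral_mono_ae ?_
      filter_upwards [ae_restrict_mem measurableSet_Ioi] with y hy
      rw [Fa_key α w hw hy, ← enorm_eq_nnnorm, Real.enorm_eq_ofReal (by positivity)]
      apply ENNReal.ofReal_le_ofReal
      rw [← Real.exp_add]
      apply Real.exp_le_exp.mpr
      have := hC y (le_of_lt hy)
      nlinarith
    exact (lt_of_le_of_lt hle hg.2).ne
  -- the swap
  have hswap : (∫ y in Ioi (0:ℝ), Real.exp (-y ^ α - w * y))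
      = ∑' n : ℕ, ∫ y in Ioi (0:ℝ), Fa α w n y := by
    rw [← integral_tsum (Fa_meas α w) hsum_lint]
    refine setIntegral_congr_fun measurableSet_Ioi fun y hy => ?_
    exact Fa_tsum α w hw hy
  -- change of variables
  have hcov : (∫ x in Ioi (0:ℝ), Real.exp (-z * x ^ α - x))
      = w * ∫ y in Ioi (0:ℝ), Real.exp (-y ^ α - w * y) := by
    have h1 := integral_comp_mul_left_Ioi (fun x => Real.exp (-z * x ^ α - x)) 0 hw
    rw [mul_zero] at h1
    have h2 : EqOn (fun x : ℝ => Real.exp (-z * (w * x) ^ α - w * x))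
        (fun x : ℝ => Real.exp (-x ^ α - w * x)) (Ioi 0) := by
      intro x hx
      simp only
      rw [Real.mul_rpow hw.le (le_of_lt hx), hwα, neg_mul, ← mul_assoc,
        mul_inv_cancel₀ hz.ne', one_mul]
    rw [setIntegral_congr_fun measurableSet_Ioi h2] at h1
    rw [h1, smul_eq_mul, ← mul_assoc, mul_inv_cancel₀ hw.ne', one_mul]
  -- summability of the T n
  set T : ℕ → ℝ := fun n => ∫ y in Ioi (0:ℝ), Fa α w n y with hT_def
  have hTsum : Summable T := by
    refine Summable.of_norm_bounded
      (g := fun n => (∫⁻ y in Ioi (0:ℝ), (‖Fa α w n y‖₊ : ℝ≥0∞)).toReal)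
      (ENNReal.summable_toReal hsum_lint) fun n => ?_
    calc ‖T n‖ ≤ (∫⁻ y in Ioi (0:ℝ), ENNReal.ofReal ‖Fa α w n y‖).toReal :=
          norm_integral_le_lintegral_norm _
      _ = _ := by simp_rw [ofReal_norm]; rfl
  -- term identification
  have hterm : ∀ n : ℕ,
      ((-1:ℝ)^(n+1) * Real.Gamma ((((n+1:ℕ)):ℝ)/α + 1) / ((n+1:ℕ).factorial : ℝ)) * w^(n+1)
        = -(w * T n) := by
    intro n
    rw [hT_def]
    simp only
    rw [Fa_integral α w hα0 n]
    have h1 : ((((n+1:ℕ)):ℝ))/α = ((n:ℝ)+1)/α := by push_cast; ring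
    rw [h1, Real.Gamma_add_one (by positivity : ((n:ℝ)+1)/α ≠ 0)]
    have h2 : (((n+1:ℕ)).factorial : ℝ) = ((n:ℝ)+1) * (n.factorial : ℝ) := by
      rw [Nat.factorial_succ]; push_cast; ring
    rw [h2, neg_pow]
    have hn : (n.factorial : ℝ) ≠ 0 := Nat.cast_ne_zero.mpr n.factorial_ne_zero
    field_simp
    ring
  -- summability of RHS series
  have hBs : Summable (fun n : ℕ =>
      ((-1:ℝ)^n * Real.Gamma ((n:ℝ)/α + 1) / (n.factorial : ℝ)) * w^n) := by
    refine (summable_nat_add_iff 1).mp ?_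
    exact (((hTsum.mul_left w).neg).congr fun n => (hterm n).symm)
  rw [hcov, hswap, hBs.tsum_eq_zero_add]
  have h0 : ((-1:ℝ)^(0:ℕ) * Real.Gamma (((0:ℕ):ℝ)/α + 1) / ((0:ℕ).factorial : ℝ)) * w^(0:ℕ)
      = 1 := by
    simp [Real.Gamma_one]
  rw [h0]
  have hshift : (∑' n : ℕ,
      ((-1:ℝ)^(n+1) * Real.Gamma ((((n+1:ℕ)):ℝ)/α + 1) / ((n+1:ℕ).factorial : ℝ)) * w^(n+1))
      = -(w * ∑' n, T n) := by
    rw [show (fun n : ℕ =>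
        ((-1:ℝ)^(n+1) * Real.Gamma ((((n+1:ℕ)):ℝ)/α + 1) / ((n+1:ℕ).factorial : ℝ)) * w^(n+1))
        = fun n => -(w * T n) from funext hterm, tsum_neg, ← tsum_mul_left]
  rw [hshift]
  ring
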